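/- Let n ≥ 3 be an integer and p > 3 a prime with p ≡ 1 (mod n), and set m = (p−1)/n. Then ∑_{k=0}^{p−1} C(m+k, m)^n · ∑_{j=1}^k 1/j ≡ ∑_{k=0}^{p−1} C(m+k, m)^n · ∑_{j=1}^{k+m} 1/j (mod p), where the congruence of the rational numbers is in the sense of p-adic valuation (both sides are p-integral and their difference has positive p-adic valuation). -/

import Mathlib

open Finset IsUltrametricDist

section HcHelpers

variable {p : ℕ} [hf : Fact p.Prime]

lemma hc_norm_nat_le_one (a : ℕ) : ‖((a : ℚ) : ℚ_[p])‖ ≤ 1 := by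
  have := Padic.norm_int_le_one (p := p) (a : ℤ)
  push_cast at this ⊢
  exact this

lemma hc_norm_nat_eq_one (j : ℕ) (h1 : 0 < j) (h2 : ¬ p ∣ j) : ‖((j : ℚ) : ℚ_[p])‖ = 1 := by
  refine le_antisymm (hc_norm_nat_le_one j) ?_
  by_contra h
  push_neg at h
  have hd : (p : ℤ) ∣ (j : ℤ) := by
    apply (Padic.norm_intCast_lt_one_iff (p := p) (k := (j : ℤ))).1
    push_cast
    exact h
  exact h2 (by exact_mod_cast hd)

lemma hc_norm_one_div_le_one (j : ℕ) (h1 : 1 ≤ j) (h2 : j < p) :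
    ‖((1 / (j : ℕ) : ℚ) : ℚ_[p])‖ ≤ 1 := by
  have hj : ¬ p ∣ j := fun hd => by have := Nat.le_of_dvd (by omega) hd; omega
  rw [Rat.cast_div, norm_div, Rat.cast_one, norm_one, hc_norm_nat_eq_one j h1 hj]
  norm_num

lemma hc_norm_one_div_le_p (j : ℕ) (h1 : 1 ≤ j) (h2 : j < p * p) :
    ‖((1 / (j : ℕ) : ℚ) : ℚ_[p])‖ ≤ (p : ℝ) := by
  have hp1 : 1 < p := hf.out.one_lt
  rw [Rat.cast_div, norm_div, Rat.cast_one, norm_one]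
  by_cases hd : p ∣ j
  · obtain ⟨t, rfl⟩ := hd
    have ht1 : 0 < t := by
      rcases Nat.eq_zero_or_pos t with h | h
      · subst h; omega
      · exact h
    have ht2 : t < p := by
      by_contra h
      push_neg at h
      exact absurd (Nat.mul_le_mul_left p h) (by omega)
    have hpt : ¬ p ∣ t := fun hdd => by have := Nat.le_of_dvd ht1 hdd; omega
    have : ‖(((p * t : ℕ) : ℚ) : ℚ_[p])‖ = (p : ℝ)⁻¹ := by
      push_cast
      rw [norm_mul]
      have h2 : ‖((t : ℚ) : ℚ_[p])‖ = 1 := hc_norm_nat_eq_one t ht1 hpt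
      rw [Rat.cast_natCast] at h2
      rw [h2, mul_one]
      simp
    rw [this, one_div, inv_inv]
  · rw [hc_norm_nat_eq_one j (by omega) hd]
    norm_num
    exact_mod_cast hp1.le

lemma hc_norm_dvd_le (a : ℕ) (h : p ∣ a) : ‖((a : ℚ) : ℚ_[p])‖ ≤ (p : ℝ)⁻¹ := by
  have := (Padic.norm_int_le_pow_iff_dvd (p := p) (a : ℤ) 1).2
    (by rw [pow_one]; exact_mod_cast h)
  push_cast at this
  rw [zpow_neg_one] at this
  push_cast
  exact this

lemma hc_descFactorial_asc (m k : ℕ) :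
    (m + k).descFactorial m = ∏ i ∈ range m, (k + i + 1) := by
  rw [Nat.descFactorial_eq_prod_range, ← Finset.prod_range_reflect (fun i => k + i + 1) m]
  refine Finset.prod_congr rfl fun i hi => ?_
  simp only [mem_range] at hi
  omega

lemma hc_choose_reflect (m k : ℕ) (h : k + m ≤ p - 1) :
    (((p - 1 - k).choose m : ℕ) : ZMod p) = (-1) ^ m * (((m + k).choose m : ℕ) : ZMod p) := by
  have hp1 : 1 < p := hf.out.one_lt
  have hmp : m < p := by omega
  have key : (((p - 1 - k).descFactorial m : ℕ) : ZMod p)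
      = (-1) ^ m * (((m + k).descFactorial m : ℕ) : ZMod p) := by
    rw [Nat.descFactorial_eq_prod_range, hc_descFactorial_asc]
    push_cast
    have : ∀ i ∈ range m, ((p - 1 - k - i : ℕ) : ZMod p) = (-1) * ((k + i + 1 : ℕ) : ZMod p) := by
      intro i hi
      simp only [mem_range] at hi
      have hsum : (p - 1 - k - i) + (k + i + 1) = p := by omega
      have : ((p - 1 - k - i : ℕ) : ZMod p) + ((k + i + 1 : ℕ) : ZMod p) = 0 := by
        rw [← Nat.cast_add, hsum, ZMod.natCast_self]
      linear_combination this
    rw [Finset.prod_congr rfl this, Finset.prod_mul_distrib, Finset.prod_const, card_range]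
    push_cast
    ring
  rw [Nat.descFactorial_eq_factorial_mul_choose, Nat.descFactorial_eq_factorial_mul_choose] at key
  push_cast at key
  have hfact : ((m.factorial : ℕ) : ZMod p) ≠ 0 := by
    rw [Ne, ZMod.natCast_eq_zero_iff]
    intro hd
    have := (Nat.Prime.dvd_factorial hf.out).1 hd
    omega
  push_cast at hfact
  apply mul_left_cancel₀ hfact
  rw [key]
  ring

lemma hc_inv_sum_reflect (m k K : ℕ) (hK : K + m + 1 = p) (hk : k ≤ K) :
    (∑ j ∈ Ico (K - k + 1) (K - k + m + 1), ((j : ℕ) : ZMod p)⁻¹)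
      = - ∑ j ∈ Ico (k + 1) (k + m + 1), ((j : ℕ) : ZMod p)⁻¹ := by
  rw [← Finset.sum_neg_distrib]
  refine Finset.sum_nbij' (fun j => p - j) (fun j => p - j) ?_ ?_ ?_ ?_ ?_
  · intro a ha; simp only [mem_Ico] at ha ⊢; omega
  · intro a ha; simp only [mem_Ico] at ha ⊢; omega
  · intro a ha; simp only [mem_Ico] at ha; show p - (p - a) = a; omega
  · intro a ha; simp only [mem_Ico] at ha; show p - (p - a) = a; omega
  · intro a ha
    simp only [mem_Ico] at ha
    have hcast : ((p - a : ℕ) : ZMod p) = - ((a : ℕ) : ZMod p) := by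
      have : ((p - a : ℕ) : ZMod p) + ((a : ℕ) : ZMod p) = 0 := by
        rw [← Nat.cast_add, Nat.sub_add_cancel (by omega), ZMod.natCast_self]
      linear_combination this
    rw [hcast, inv_neg, neg_neg]

lemma hc_S_eq_zero (n m K : ℕ) (hK : K + m + 1 = p) (hp : 3 < p)
    (hm : p - 1 = m * n) :
    ∑ k ∈ range (K + 1), (((m + k).choose m : ℕ) : ZMod p) ^ n *
      ∑ j ∈ Ico (k + 1) (k + m + 1), ((j : ℕ) : ZMod p)⁻¹ = 0 := by
  set c : ℕ → ZMod p := fun k => (((m + k).choose m : ℕ) : ZMod p) ^ n *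
      ∑ j ∈ Ico (k + 1) (k + m + 1), ((j : ℕ) : ZMod p)⁻¹ with hc
  have hodd : Odd p := hf.out.odd_of_ne_two (by omega)
  have heven : Even (p - 1) := Nat.Odd.sub_odd hodd odd_one
  have hrefl : ∀ k, k ≤ K → c (K - k) = - c k := by
    intro k hk
    have h1 : m + (K - k) = p - 1 - k := by omega
    rw [hc]
    simp only []
    rw [h1, hc_choose_reflect m k (by omega), hc_inv_sum_reflect m k K hK hk]
    rw [mul_pow, ← pow_mul, ← hm, heven.neg_one_pow]
    ring
  have hS2 : ∑ k ∈ range (K + 1), c k = - ∑ k ∈ range (K + 1), c k := by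
    conv_lhs => rw [← Finset.sum_range_reflect c (K + 1)]
    rw [← Finset.sum_neg_distrib]
    refine Finset.sum_congr rfl fun k hk => ?_
    simp only [mem_range] at hk
    have : K + 1 - 1 - k = K - k := by omega
    rw [this, hrefl k (by omega)]
  have h2S : (2 : ZMod p) * ∑ k ∈ range (K + 1), c k = 0 := by
    linear_combination hS2
  rcases mul_eq_zero.1 h2S with h | h
  · exfalso
    have : ((2 : ℕ) : ZMod p) = 0 := by exact_mod_cast h
    rw [ZMod.natCast_eq_zero_iff] at this
    have := Nat.le_of_dvd (by omega) this
    omega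
  · exact h

lemma hc_real_bound {p n : ℕ} (hp : 2 ≤ p) (hn : 2 ≤ n) :
    ((p : ℝ))⁻¹ ^ n * p ≤ (p : ℝ)⁻¹ := by
  have hp0 : (0 : ℝ) < p := by exact_mod_cast (by omega : 0 < p)
  have hp1 : (1 : ℝ) ≤ p := by exact_mod_cast (by omega : 1 ≤ p)
  have hpow : (p : ℝ) ^ 2 ≤ (p : ℝ) ^ n := pow_le_pow_right₀ hp1 hn
  calc ((p : ℝ))⁻¹ ^ n * p = p / p ^ n := by rw [inv_pow]; ring
    _ ≤ p / p ^ 2 := by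
        apply div_le_div_of_nonneg_left hp0.le (by positivity) hpow
    _ = (p : ℝ)⁻¹ := by
        rw [pow_two]
        field_simp

end HcHelpers

/-- harmonic-sum congruence modulo `p` for
`∑_{k=0}^{p-1} C(m+k,m) ∑_{j=1}^k 1/j`. Both sides are `p`-integral and
their difference has positive `p`-adic valuation. -/
theorem harmonic_congruence_mod_p (n p m : ℕ) [Fact p.Prime]
    (hn : 3 ≤ n) (hp : 3 < p) (hpn : p ≡ 1 [MOD n]) (hm : p - 1 = m * n) :
    ‖((∑ k ∈ Finset.range p, (Nat.choose (m + k) m : ℚ) ^ n *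
        ∑ j ∈ Finset.Icc 1 k, (1 : ℚ) / j : ℚ) : ℚ_[p])‖ ≤ 1 ∧
    ‖((∑ k ∈ Finset.range p, (Nat.choose (m + k) m : ℚ) ^ n *
        ∑ j ∈ Finset.Icc 1 (k + m), (1 : ℚ) / j : ℚ) : ℚ_[p])‖ ≤ 1 ∧
    ‖((∑ k ∈ Finset.range p, (Nat.choose (m + k) m : ℚ) ^ n *
        ∑ j ∈ Finset.Icc 1 k, (1 : ℚ) / j : ℚ) : ℚ_[p]) -
      ((∑ k ∈ Finset.range p, (Nat.choose (m + k) m : ℚ) ^ n *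
        ∑ j ∈ Finset.Icc 1 (k + m), (1 : ℚ) / j : ℚ) : ℚ_[p])‖ ≤ (p : ℝ) ^ (-1 : ℤ) := by
  have hprime : p.Prime := Fact.out
  have hm1 : 1 ≤ m := by
    rcases Nat.eq_zero_or_pos m with h | h
    · rw [h, Nat.zero_mul] at hm; omega
    · exact h
  have h3m : m * 3 ≤ p - 1 := by rw [hm]; exact Nat.mul_le_mul_left m hn
  set K := p - 1 - m with hKdef
  have hK : K + m + 1 = p := by omega
  have hpp : 2 * p ≤ p * p := Nat.mul_le_mul_right p (by omega)
  -- part 1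
  have part1 : ‖((∑ k ∈ Finset.range p, (Nat.choose (m + k) m : ℚ) ^ n *
        ∑ j ∈ Finset.Icc 1 k, (1 : ℚ) / j : ℚ) : ℚ_[p])‖ ≤ 1 := by
    rw [Rat.cast_sum]
    refine norm_sum_le_of_forall_le_of_nonneg zero_le_one fun k hk => ?_
    simp only [mem_range] at hk
    rw [Rat.cast_mul, Rat.cast_pow, norm_mul, norm_pow]
    have hC := hc_norm_nat_le_one (p := p) ((m + k).choose m)
    have hH : ‖((∑ j ∈ Finset.Icc 1 k, (1 : ℚ) / j : ℚ) : ℚ_[p])‖ ≤ 1 := by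
      rw [Rat.cast_sum]
      refine norm_sum_le_of_forall_le_of_nonneg zero_le_one fun j hj => ?_
      simp only [mem_Icc] at hj
      exact hc_norm_one_div_le_one j hj.1 (by omega)
    simpa using mul_le_mul (pow_le_one₀ (norm_nonneg _) hC) hH (norm_nonneg _) zero_le_one
  -- binomials divisible by p in the tail
  have hbig : ∀ k, k < p → p ≤ m + k → ‖((Nat.choose (m + k) m : ℚ) : ℚ_[p])‖ ≤ (p : ℝ)⁻¹ := by
    intro k hk hpk
    apply hc_norm_dvd_le
    exact hprime.dvd_choose (by omega) (by omega : (m + k) - m < p) hpk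
  -- part 2
  have part2 : ‖((∑ k ∈ Finset.range p, (Nat.choose (m + k) m : ℚ) ^ n *
        ∑ j ∈ Finset.Icc 1 (k + m), (1 : ℚ) / j : ℚ) : ℚ_[p])‖ ≤ 1 := by
    rw [Rat.cast_sum]
    refine norm_sum_le_of_forall_le_of_nonneg zero_le_one fun k hk => ?_
    simp only [mem_range] at hk
    rw [Rat.cast_mul, Rat.cast_pow, norm_mul, norm_pow]
    by_cases hcase : k + m + 1 ≤ p
    · have hC := hc_norm_nat_le_one (p := p) ((m + k).choose m)
      have hH : ‖((∑ j ∈ Finset.Icc 1 (k + m), (1 : ℚ) / j : ℚ) : ℚ_[p])‖ ≤ 1 := by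
        rw [Rat.cast_sum]
        refine norm_sum_le_of_forall_le_of_nonneg zero_le_one fun j hj => ?_
        simp only [mem_Icc] at hj
        exact hc_norm_one_div_le_one j hj.1 (by omega)
      simpa using mul_le_mul (pow_le_one₀ (norm_nonneg _) hC) hH (norm_nonneg _) zero_le_one
    · have hC := hbig k hk (by omega)
      have hCn := pow_le_pow_left₀ (norm_nonneg _) hC n
      have hH : ‖((∑ j ∈ Finset.Icc 1 (k + m), (1 : ℚ) / j : ℚ) : ℚ_[p])‖ ≤ (p : ℝ) := by
        rw [Rat.cast_sum]
        refine norm_sum_le_of_forall_le_of_nonneg (by positivity) fun j hj => ?_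
        simp only [mem_Icc] at hj
        exact hc_norm_one_div_le_p j hj.1 (by omega)
      refine (mul_le_mul hCn hH (norm_nonneg _) (by positivity)).trans ?_
      refine (hc_real_bound (by omega) (by omega)).trans ?_
      exact inv_le_one_of_one_le₀ (by exact_mod_cast (by omega : 1 ≤ p))
  refine ⟨part1, part2, ?_⟩
  -- part 3
  set T : ℕ → ℚ := fun k => ∑ j ∈ Finset.Ico (k + 1) (k + m + 1), (1 : ℚ) / j with hT
  have hABR : (∑ k ∈ Finset.range p, (Nat.choose (m + k) m : ℚ) ^ n *
        ∑ j ∈ Finset.Icc 1 k, (1 : ℚ) / j)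
      - (∑ k ∈ Finset.range p, (Nat.choose (m + k) m : ℚ) ^ n *
        ∑ j ∈ Finset.Icc 1 (k + m), (1 : ℚ) / j)
      = - ∑ k ∈ Finset.range p, (Nat.choose (m + k) m : ℚ) ^ n * T k := by
    rw [← Finset.sum_sub_distrib, ← Finset.sum_neg_distrib]
    refine Finset.sum_congr rfl fun k _ => ?_
    have hsplit : ∑ j ∈ Finset.Icc 1 (k + m), (1 : ℚ) / j
        = (∑ j ∈ Finset.Icc 1 k, (1 : ℚ) / j) + T k := by
      rw [hT]
      simp only []
      rw [show Finset.Icc 1 (k + m) = Finset.Ico 1 (k + m + 1) from (Finset.Ico_add_one_right_eq_Icc _ _).symm,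
        show Finset.Icc 1 k = Finset.Ico 1 (k + 1) from (Finset.Ico_add_one_right_eq_Icc _ _).symm]
      exact (Finset.sum_Ico_consecutive _ (by omega : 1 ≤ k + 1) (by omega : k + 1 ≤ k + m + 1)).symm
    rw [hsplit]
    ring
  have hRsplit : ∑ k ∈ Finset.range p, (Nat.choose (m + k) m : ℚ) ^ n * T k
      = (∑ k ∈ Finset.range (K + 1), (Nat.choose (m + k) m : ℚ) ^ n * T k)
      + ∑ k ∈ Finset.Ico (K + 1) p, (Nat.choose (m + k) m : ℚ) ^ n * T k :=
    (Finset.sum_range_add_sum_Ico _ (by omega : K + 1 ≤ p)).symm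
  set L := (p - 1).factorial with hLdef
  have hdvdL : ∀ j, 1 ≤ j → j ≤ p - 1 → j ∣ L := fun j h1 h2 => Nat.dvd_factorial h1 h2
  set N : ℕ := ∑ k ∈ Finset.range (K + 1), ((m + k).choose m) ^ n *
      ∑ j ∈ Finset.Ico (k + 1) (k + m + 1), L / j with hNdef
  have hLH : (L : ℚ) * (∑ k ∈ Finset.range (K + 1), (Nat.choose (m + k) m : ℚ) ^ n * T k)
      = (N : ℚ) := by
    rw [hNdef]
    push_cast
    rw [Finset.mul_sum]
    refine Finset.sum_congr rfl fun k hk => ?_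
    simp only [mem_range] at hk
    rw [hT]
    simp only []
    have hterm : ∀ j ∈ Finset.Ico (k + 1) (k + m + 1),
        ((L / j : ℕ) : ℚ) = (L : ℚ) * ((1 : ℚ) / j) := by
      intro j hj
      simp only [mem_Ico] at hj
      have h1 : 1 ≤ j := by omega
      have h2 : j ≤ p - 1 := by omega
      rw [Nat.cast_div (hdvdL j h1 h2) (Nat.cast_ne_zero.2 (by omega))]
      ring
    rw [Finset.sum_congr rfl hterm, ← Finset.mul_sum]
    ring
  have hSz := hc_S_eq_zero (p := p) n m K hK hp hm
  have hNz : (N : ZMod p) = 0 := by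
    rw [hNdef]
    push_cast
    have hstep : ∀ k ∈ Finset.range (K + 1),
        (((m + k).choose m : ℕ) : ZMod p) ^ n *
          (∑ j ∈ Finset.Ico (k + 1) (k + m + 1), ((L / j : ℕ) : ZMod p))
        = (L : ZMod p) * ((((m + k).choose m : ℕ) : ZMod p) ^ n *
          ∑ j ∈ Finset.Ico (k + 1) (k + m + 1), ((j : ℕ) : ZMod p)⁻¹) := by
      intro k hk
      simp only [mem_range] at hk
      have hterm : ∀ j ∈ Finset.Ico (k + 1) (k + m + 1),
          ((L / j : ℕ) : ZMod p) = (L : ZMod p) * ((j : ℕ) : ZMod p)⁻¹ := by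
        intro j hj
        simp only [mem_Ico] at hj
        have h1 : 1 ≤ j := by omega
        have h2 : j ≤ p - 1 := by omega
        have hjne : ((j : ℕ) : ZMod p) ≠ 0 := by
          rw [Ne, ZMod.natCast_eq_zero_iff]
          intro hd
          have := Nat.le_of_dvd (by omega) hd
          omega
        rw [eq_mul_inv_iff_mul_eq₀ hjne, ← Nat.cast_mul, Nat.div_mul_cancel (hdvdL j h1 h2)]
      rw [Finset.sum_congr rfl hterm, ← Finset.mul_sum]
      ring
    rw [Finset.sum_congr rfl hstep, ← Finset.mul_sum, hSz, mul_zero]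
  have hpN : p ∣ N := (ZMod.natCast_eq_zero_iff N p).1 hNz
  have hLnorm : ‖((L : ℚ) : ℚ_[p])‖ = 1 := by
    apply hc_norm_nat_eq_one L (Nat.factorial_pos _)
    rw [hLdef]
    intro hd
    have := (Nat.Prime.dvd_factorial hprime).1 hd
    omega
  have hhead : ‖((∑ k ∈ Finset.range (K + 1), (Nat.choose (m + k) m : ℚ) ^ n * T k : ℚ) : ℚ_[p])‖
      ≤ (p : ℝ)⁻¹ := by
    have hcast : ((L : ℚ) : ℚ_[p]) *
        ((∑ k ∈ Finset.range (K + 1), (Nat.choose (m + k) m : ℚ) ^ n * T k : ℚ) : ℚ_[p])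
        = ((N : ℚ) : ℚ_[p]) := by
      rw [← Rat.cast_mul, hLH]
    have hnorm := congrArg norm hcast
    rw [norm_mul, hLnorm, one_mul] at hnorm
    rw [hnorm]
    exact hc_norm_dvd_le N hpN
  have htail : ‖((∑ k ∈ Finset.Ico (K + 1) p, (Nat.choose (m + k) m : ℚ) ^ n * T k : ℚ) : ℚ_[p])‖
      ≤ (p : ℝ)⁻¹ := by
    rw [Rat.cast_sum]
    refine norm_sum_le_of_forall_le_of_nonneg (by positivity) fun k hk => ?_
    simp only [mem_Ico] at hk
    rw [Rat.cast_mul, Rat.cast_pow, norm_mul, norm_pow]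
    have hC := hbig k hk.2 (by omega)
    have hCn := pow_le_pow_left₀ (norm_nonneg _) hC n
    have hH : ‖((T k : ℚ) : ℚ_[p])‖ ≤ (p : ℝ) := by
      rw [hT]
      simp only []
      rw [Rat.cast_sum]
      refine norm_sum_le_of_forall_le_of_nonneg (by positivity) fun j hj => ?_
      simp only [mem_Ico] at hj
      exact hc_norm_one_div_le_p j (by omega) (by omega)
    exact (mul_le_mul hCn hH (norm_nonneg _) (by positivity)).trans
      (hc_real_bound (by omega) (by omega))
  rw [← Rat.cast_sub, hABR, hRsplit, Rat.cast_neg, norm_neg, Rat.cast_add]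
  have hz : ((p : ℝ)) ^ (-1 : ℤ) = (p : ℝ)⁻¹ := zpow_neg_one _
  rw [hz]
  exact le_trans (Padic.nonarchimedean _ _) (max_le hhead htail)
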